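/- Let m ≥ 1, let M, N ⊆ [m] with M ⊊ [m] and N ≠ ∅, and let D = aΔ_M^c + cΔ_N ⊆ E^m. Then the linear right-E-code C^R_D has length |D| = (2^m−2^{|M|})·2^{|N|} and size 2^m, and the multiset {wt_Lee(c^R_D(v)) : v ∈ E^m} (with multiplicity over all 2^{2m} elements v ∈ E^m) consists of: (2^m−2^{|M|})·2^{|N|} with multiplicity 2^m(2^m−2^{m−|N|}); 2^{m+|N|−1} with multiplicity 2^m(2^{m−|M∪N|}−1); (2^m−2^{|M|})·2^{|N|−1} with multiplicity 2^m(2^{m−|N|}−2^{m−|M∪N|}); and 0 with multiplicity 2^m. -/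

import Mathlib

open Finset

/-- The simplicial complex `Δ_M ⊆ 𝔽₂^m` generated by `M ⊆ [m]`:
all vectors whose support is contained in `M`. -/
def deltaC {m : ℕ} (M : Finset (Fin m)) : Finset (Fin m → ZMod 2) :=
  Finset.univ.filter (fun w => ∀ i, w i ≠ 0 → i ∈ M)

/-- Dot product over `𝔽₂`. -/
def dotp {m : ℕ} (x y : Fin m → ZMod 2) : ZMod 2 := ∑ i, x i * y i

/-- The Gray map on a single element `a·s + c·t ↔ (s, t)` of `E = 𝔽₂ × 𝔽₂`:
`Φ(as + ct) = (t, s + t)`. -/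
def grayPair (e : ZMod 2 × ZMod 2) : Fin 2 → ZMod 2 := ![e.2, e.1 + e.2]

/-- The left codeword `c^L_D(v)` for `v = aα + cβ ↔ (α, β)`:
its coordinate at `d = (t₁, t₂) ∈ D` is `a(α·t₁) + c(β·t₁) ↔ (α·t₁, β·t₁)`. -/
def cwL {m : ℕ} (Ds : Finset ((Fin m → ZMod 2) × (Fin m → ZMod 2)))
    (v : (Fin m → ZMod 2) × (Fin m → ZMod 2)) :
    {d // d ∈ Ds} → ZMod 2 × ZMod 2 :=
  fun d => (dotp v.1 d.1.1, dotp v.2 d.1.1)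

/-- The Gray image `Φ(c^L_D(v)) ∈ 𝔽₂^{2|D|}` of the left codeword `c^L_D(v)`;
its Hamming weight (`hammingNorm`) is the Lee weight of `c^L_D(v)`. -/
def gcwL {m : ℕ} (Ds : Finset ((Fin m → ZMod 2) × (Fin m → ZMod 2)))
    (v : (Fin m → ZMod 2) × (Fin m → ZMod 2)) :
    {d // d ∈ Ds} × Fin 2 → ZMod 2 :=
  fun x => grayPair (cwL Ds v x.1) x.2

/-- The right codeword `c^R_D(v)` for `v = aα + cβ ↔ (α, β)`:
its coordinate at `d = (t₁, t₂) ∈ D` is `a(t₁·α) + c(t₂·α) ↔ (t₁·α, t₂·α)`. -/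
def cwR {m : ℕ} (Ds : Finset ((Fin m → ZMod 2) × (Fin m → ZMod 2)))
    (v : (Fin m → ZMod 2) × (Fin m → ZMod 2)) :
    {d // d ∈ Ds} → ZMod 2 × ZMod 2 :=
  fun d => (dotp d.1.1 v.1, dotp d.1.2 v.1)

/-- The Gray image `Φ(c^R_D(v)) ∈ 𝔽₂^{2|D|}` of the right codeword `c^R_D(v)`;
its Hamming weight (`hammingNorm`) is the Lee weight of `c^R_D(v)`. -/
def gcwR {m : ℕ} (Ds : Finset ((Fin m → ZMod 2) × (Fin m → ZMod 2)))
    (v : (Fin m → ZMod 2) × (Fin m → ZMod 2)) :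
    {d // d ∈ Ds} × Fin 2 → ZMod 2 :=
  fun x => grayPair (cwR Ds v x.1) x.2



section stmt11aux

variable {m : ℕ}

private lemma zcases' : ∀ z : ZMod 2, z = 0 ∨ z = 1 := by decide

private lemma zne' : ∀ z : ZMod 2, (¬ z = 0) ↔ z = 1 := by decide

private lemma mem_deltaC' {S : Finset (Fin m)} {w : Fin m → ZMod 2} :
    w ∈ deltaC S ↔ ∀ i, w i ≠ 0 → i ∈ S := by simp [deltaC]

private lemma dotp_add_left' (x y α : Fin m → ZMod 2) :
    dotp (x + y) α = dotp x α + dotp y α := by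
  simp [dotp, add_mul, Finset.sum_add_distrib]

private lemma dotp_add_right' (t x y : Fin m → ZMod 2) :
    dotp t (x + y) = dotp t x + dotp t y := by
  simp [dotp, mul_add, Finset.sum_add_distrib]

private lemma dotp_single' (i : Fin m) (α : Fin m → ZMod 2) :
    dotp (Pi.single i 1) α = α i := by
  simp [dotp, Pi.single_apply, ite_mul]

private lemma dotp_zero_right' (t : Fin m → ZMod 2) : dotp t 0 = 0 := by simp [dotp]

private lemma card_deltaC' (S : Finset (Fin m)) : (deltaC S).card = 2 ^ S.card := by
  have : (deltaC S).card = (Finset.univ : Finset (↥S → ZMod 2)).card := by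
    apply Finset.card_nbij' (fun w (j : ↥S) => w j)
      (fun g i => if h : i ∈ S then g ⟨i, h⟩ else 0)
    · intro a _; exact Finset.mem_univ _
    · intro g _
      rw [Finset.mem_coe, mem_deltaC']
      intro i hi
      by_contra hiS
      simp [hiS] at hi
    · intro w hw
      funext i
      by_cases h : i ∈ S
      · simp [h]
      · simp [h]
        exact by_contra fun hc => h (mem_deltaC'.1 hw i (Ne.symm hc))
    · intro g _; funext j; simp
  rw [this, Finset.card_univ, Fintype.card_fun]
  simp

private lemma zero_mem_deltaC' (S : Finset (Fin m)) : (0 : Fin m → ZMod 2) ∈ deltaC S := by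
  simp [mem_deltaC']

private lemma deltaC_closed' {S : Finset (Fin m)} {i : Fin m} (hi : i ∈ S)
    {t : Fin m → ZMod 2} (ht : t ∈ deltaC S) : t + Pi.single i 1 ∈ deltaC S := by
  rw [mem_deltaC'] at ht ⊢
  intro j hj
  by_cases h : j = i
  · exact h ▸ hi
  · apply ht j
    simpa [Pi.single_apply, h] using hj

private lemma half' (T : Finset (Fin m → ZMod 2)) (α : Fin m → ZMod 2) (i : Fin m)
    (hi : α i ≠ 0) (hT : ∀ t ∈ T, t + Pi.single i 1 ∈ T) :
    2 * (T.filter (fun t => dotp t α = 1)).card = T.card := by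
  have hαi : α i = 1 := (zne' _).1 hi
  have hdot : ∀ t : Fin m → ZMod 2, dotp (t + Pi.single i 1) α = dotp t α + 1 := by
    intro t; rw [dotp_add_left', dotp_single', hαi]
  have key : (T.filter (fun t => dotp t α = 1)).card
      = (T.filter (fun t => ¬ dotp t α = 1)).card := by
    apply Finset.card_nbij' (fun t => t + Pi.single i 1) (fun t => t + Pi.single i 1)
    · intro t ht
      rw [Finset.mem_coe, Finset.mem_filter] at ht ⊢
      refine ⟨hT t ht.1, ?_⟩
      rw [hdot, ht.2]; decide
    · intro t ht
      rw [Finset.mem_coe, Finset.mem_filter] at ht ⊢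
      refine ⟨hT t ht.1, ?_⟩
      rw [hdot]
      rcases zcases' (dotp t α) with h | h
      · rw [h]; decide
      · exact absurd h ht.2
    · intro t _; funext j; by_cases h : j = i <;> simp [Pi.single_apply, h]
      · rcases zcases' (t i) with h' | h' <;> rw [h'] <;> decide
    · intro t _; funext j; by_cases h : j = i <;> simp [Pi.single_apply, h]
      · rcases zcases' (t i) with h' | h' <;> rw [h'] <;> decide
  have := Finset.card_filter_add_card_filter_not (s := T)
    (p := fun t => dotp t α = 1)
  omega

private lemma vanish' {S : Finset (Fin m)} {α : Fin m → ZMod 2} (h : ∀ i ∈ S, α i = 0) :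
    ∀ t ∈ deltaC S, dotp t α = 0 := by
  intro t ht
  apply Finset.sum_eq_zero
  intro i _
  by_cases hti : t i = 0
  · rw [hti, zero_mul]
  · rw [h i (mem_deltaC'.1 ht i hti), mul_zero]

private lemma card_univ_fun' : (Finset.univ : Finset (Fin m → ZMod 2)).card = 2 ^ m := by
  rw [Finset.card_univ, Fintype.card_fun]
  simp

private lemma weight_formula' (M N : Finset (Fin m))
    (Ds : Finset ((Fin m → ZMod 2) × (Fin m → ZMod 2)))
    (hDs : Ds = (deltaC M)ᶜ ×ˢ deltaC N)
    (v : (Fin m → ZMod 2) × (Fin m → ZMod 2)) :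
    hammingNorm (gcwR Ds v) =
      ∑ t₁ ∈ (deltaC M)ᶜ, ∑ t₂ ∈ deltaC N,
        ((if dotp t₂ v.1 ≠ 0 then 1 else 0) +
         (if dotp t₁ v.1 + dotp t₂ v.1 ≠ 0 then 1 else 0)) := by
  rw [hammingNorm, Finset.card_filter]
  rw [Fintype.sum_prod_type]
  have step : ∀ d : {d // d ∈ Ds},
      (∑ j : Fin 2, if gcwR Ds v (d, j) ≠ 0 then 1 else 0) =
      ((if dotp d.1.2 v.1 ≠ 0 then 1 else 0) +
       (if dotp d.1.1 v.1 + dotp d.1.2 v.1 ≠ 0 then 1 else 0)) := by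
    intro d
    rw [Fin.sum_univ_two]
    simp [gcwR, grayPair, cwR]
    by_cases hd : dotp d.1.2 v.1 = 0 <;> simp [hd]
  rw [Finset.sum_congr rfl (fun d _ => step d)]
  rw [Finset.univ_eq_attach]
  rw [Finset.sum_attach Ds (fun d => ((if dotp d.2 v.1 ≠ 0 then 1 else 0) +
       (if dotp d.1 v.1 + dotp d.2 v.1 ≠ 0 then 1 else 0)))]
  rw [hDs, Finset.sum_product]

private lemma wsum_class1' {M N : Finset (Fin m)} {α : Fin m → ZMod 2}
    (hα : ∃ i ∈ N, α i ≠ 0) :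
    (∑ t₁ ∈ (deltaC M)ᶜ, ∑ t₂ ∈ deltaC N,
      ((if dotp t₂ α ≠ 0 then 1 else 0) +
       (if dotp t₁ α + dotp t₂ α ≠ 0 then 1 else 0))) =
    (2 ^ m - 2 ^ M.card) * 2 ^ N.card := by
  obtain ⟨i, hiN, hi⟩ := hα
  have inner : ∀ t₁ : Fin m → ZMod 2,
      (∑ t₂ ∈ deltaC N, ((if dotp t₂ α ≠ 0 then 1 else 0) +
        (if dotp t₁ α + dotp t₂ α ≠ 0 then (1:ℕ) else 0))) = 2 ^ N.card := by
    intro t₁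
    rcases zcases' (dotp t₁ α) with h | h
    · have : ∀ t₂ ∈ deltaC N, ((if dotp t₂ α ≠ 0 then 1 else 0) +
          (if dotp t₁ α + dotp t₂ α ≠ 0 then (1:ℕ) else 0)) =
          2 * (if dotp t₂ α = 1 then 1 else 0) := by
        intro t₂ _
        rw [h, zero_add]
        rcases zcases' (dotp t₂ α) with h2 | h2 <;> rw [h2] <;> decide
      rw [Finset.sum_congr rfl this, ← Finset.mul_sum]
      rw [← Finset.card_filter]
      rw [half' (deltaC N) α i hi (fun t ht => deltaC_closed' hiN ht), card_deltaC']
    · have : ∀ t₂ ∈ deltaC N, ((if dotp t₂ α ≠ 0 then 1 else 0) +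
          (if dotp t₁ α + dotp t₂ α ≠ 0 then (1:ℕ) else 0)) = 1 := by
        intro t₂ _
        rw [h]
        rcases zcases' (dotp t₂ α) with h2 | h2 <;> rw [h2] <;> decide
      rw [Finset.sum_congr rfl this, Finset.sum_const, smul_eq_mul, mul_one, card_deltaC']
  rw [Finset.sum_congr rfl (fun t₁ _ => inner t₁), Finset.sum_const, smul_eq_mul]
  congr 1
  rw [Finset.card_compl, card_deltaC', Fintype.card_fun]
  simp

private lemma wsum_classN0' {M N : Finset (Fin m)} {α : Fin m → ZMod 2}
    (hα : ∀ i ∈ N, α i = 0) :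
    (∑ t₁ ∈ (deltaC M)ᶜ, ∑ t₂ ∈ deltaC N,
      ((if dotp t₂ α ≠ 0 then 1 else 0) +
       (if dotp t₁ α + dotp t₂ α ≠ 0 then 1 else 0))) =
    2 ^ N.card * ((deltaC M)ᶜ.filter (fun t => dotp t α = 1)).card := by
  have inner : ∀ t₁ : Fin m → ZMod 2,
      (∑ t₂ ∈ deltaC N, ((if dotp t₂ α ≠ 0 then 1 else 0) +
        (if dotp t₁ α + dotp t₂ α ≠ 0 then (1:ℕ) else 0))) =
      2 ^ N.card * (if dotp t₁ α = 1 then 1 else 0) := by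
    intro t₁
    have : ∀ t₂ ∈ deltaC N, ((if dotp t₂ α ≠ 0 then 1 else 0) +
        (if dotp t₁ α + dotp t₂ α ≠ 0 then (1:ℕ) else 0)) =
        (if dotp t₁ α = 1 then 1 else 0) := by
      intro t₂ ht₂
      rw [vanish' hα t₂ ht₂]
      rcases zcases' (dotp t₁ α) with h | h <;> rw [h] <;> decide
    rw [Finset.sum_congr rfl this, Finset.sum_const, smul_eq_mul, card_deltaC']
  rw [Finset.sum_congr rfl (fun t₁ _ => inner t₁), ← Finset.mul_sum, ← Finset.card_filter]

private lemma Acard_split' (S : Finset (Fin m)) (α : Fin m → ZMod 2) :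
    ((Finset.univ : Finset (Fin m → ZMod 2)).filter (fun t => dotp t α = 1)).card
      = ((deltaC S).filter (fun t => dotp t α = 1)).card
        + ((deltaC S)ᶜ.filter (fun t => dotp t α = 1)).card := by
  rw [← Finset.card_union_of_disjoint
      (Finset.disjoint_filter_filter (disjoint_compl_right)),
    ← Finset.filter_union, Finset.union_compl]

private lemma Acard_zero' (S : Finset (Fin m)) :
    ((deltaC S)ᶜ.filter (fun t => dotp t (0 : Fin m → ZMod 2) = 1)).card = 0 := by
  rw [Finset.card_eq_zero, Finset.filter_eq_empty_iff]
  intro t _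
  rw [dotp_zero_right']
  decide

private lemma Acard_vanish' (S : Finset (Fin m)) (α : Fin m → ZMod 2)
    (hS : ∀ i ∈ S, α i = 0) :
    ((deltaC S).filter (fun t => dotp t α = 1)).card = 0 := by
  rw [Finset.card_eq_zero, Finset.filter_eq_empty_iff]
  intro t ht
  rw [vanish' hS t ht]
  decide

private lemma Acard_univ' (α : Fin m → ZMod 2) (hα : α ≠ 0) :
    2 * ((Finset.univ : Finset (Fin m → ZMod 2)).filter (fun t => dotp t α = 1)).card
      = 2 ^ m := by
  obtain ⟨i, hi⟩ := Function.ne_iff.1 hα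
  rw [half' Finset.univ α i hi (fun t _ => Finset.mem_univ _), card_univ_fun']

private lemma Acard_delta' (S : Finset (Fin m)) (α : Fin m → ZMod 2) {i : Fin m}
    (hiS : i ∈ S) (hi : α i ≠ 0) :
    2 * ((deltaC S).filter (fun t => dotp t α = 1)).card = 2 ^ S.card := by
  rw [half' (deltaC S) α i hi (fun t ht => deltaC_closed' hiS ht), card_deltaC']

private lemma w2val' {M N : Finset (Fin m)} (hm : 1 ≤ m) (α : Fin m → ZMod 2) (hα : α ≠ 0)
    (hS : ∀ i ∈ M, α i = 0) :
    2 ^ N.card * (((deltaC M))ᶜ.filter (fun t => dotp t α = 1)).card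
      = 2 ^ (m + N.card - 1) := by
  have h1 := Acard_split' M α
  have h2 := Acard_vanish' M α hS
  have h3 := Acard_univ' α hα
  have hA : ((deltaC M)ᶜ.filter (fun t => dotp t α = 1)).card = 2 ^ (m - 1) := by
    have : 2 ^ m = 2 * 2 ^ (m - 1) := by
      rw [← pow_succ']
      congr 1
      omega
    omega
  rw [hA, ← pow_add]
  congr 1
  omega

private lemma w3val' {M N : Finset (Fin m)} (hN : N.Nonempty) (α : Fin m → ZMod 2)
    {i : Fin m} (hiM : i ∈ M) (hi : α i ≠ 0) :
    2 ^ N.card * (((deltaC M))ᶜ.filter (fun t => dotp t α = 1)).card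
      = (2 ^ m - 2 ^ M.card) * 2 ^ (N.card - 1) := by
  have h1 := Acard_split' M α
  have h3 := Acard_univ' α (fun h => hi (by rw [h]; rfl))
  have h4 := Acard_delta' M α hiM hi
  set A' := ((deltaC M)ᶜ.filter (fun t => dotp t α = 1)).card
  have hsub : 2 ^ m - 2 ^ M.card = 2 * A' := by omega
  have hpow : 2 ^ N.card = 2 * 2 ^ (N.card - 1) := by
    rw [← pow_succ']
    congr 1
    have := Finset.card_pos.2 hN
    omega
  rw [hsub, hpow]
  ring

private lemma deltaC_mono' {S T : Finset (Fin m)} (h : S ⊆ T) : deltaC S ⊆ deltaC T := by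
  intro w hw
  rw [mem_deltaC'] at hw ⊢
  exact fun i hi => h (hw i hi)

private lemma class1_card' (N : Finset (Fin m)) :
    ((Finset.univ : Finset (Fin m → ZMod 2)).filter (fun α => ∃ i ∈ N, α i ≠ 0)).card
      = 2 ^ m - 2 ^ (m - N.card) := by
  classical
  have hneg : ((Finset.univ : Finset (Fin m → ZMod 2)).filter
      (fun α => ¬ ∃ i ∈ N, α i ≠ 0)) = deltaC Nᶜ := by
    ext α
    simp only [Finset.mem_filter, Finset.mem_univ, true_and, mem_deltaC', Finset.mem_compl]
    push_neg
    constructor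
    · intro h i hi
      intro hiN
      exact hi (h i hiN)
    · intro h i hi
      by_contra hc
      exact h i hc hi
  have htot := Finset.card_filter_add_card_filter_not
    (s := (Finset.univ : Finset (Fin m → ZMod 2))) (p := fun α => ∃ i ∈ N, α i ≠ 0)
  rw [hneg, card_deltaC', card_univ_fun'] at htot
  have hc : (Nᶜ : Finset (Fin m)).card = m - N.card := by
    rw [Finset.card_compl]
    simp
  have h2 : (2:ℕ) ^ (Nᶜ : Finset (Fin m)).card = 2 ^ (m - N.card) := by rw [hc]
  rw [h2] at htot
  exact Nat.eq_sub_of_add_eq htot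

private lemma class2_card' (M N : Finset (Fin m)) :
    ((Finset.univ : Finset (Fin m → ZMod 2)).filter
      (fun α => α ≠ 0 ∧ (∀ i ∈ N, α i = 0) ∧ (∀ i ∈ M, α i = 0))).card
      = 2 ^ (m - (M ∪ N).card) - 1 := by
  classical
  have hset : ((Finset.univ : Finset (Fin m → ZMod 2)).filter
      (fun α => α ≠ 0 ∧ (∀ i ∈ N, α i = 0) ∧ (∀ i ∈ M, α i = 0)))
      = (deltaC (M ∪ N)ᶜ).erase 0 := by
    ext α
    simp only [Finset.mem_filter, Finset.mem_univ, true_and, Finset.mem_erase,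
      mem_deltaC', Finset.mem_compl, Finset.mem_union]
    constructor
    · rintro ⟨h0, hN, hM⟩
      refine ⟨h0, fun i hi => ?_⟩
      rintro (h | h)
      · exact hi (hM i h)
      · exact hi (hN i h)
    · rintro ⟨h0, h⟩
      refine ⟨h0, fun i hi => ?_, fun i hi => ?_⟩
      · by_contra hc
        exact h i hc (Or.inr hi)
      · by_contra hc
        exact h i hc (Or.inl hi)
  rw [hset, Finset.card_erase_of_mem (zero_mem_deltaC' _), card_deltaC']
  congr 2
  rw [Finset.card_compl]
  simp

private lemma class3_card' (M N : Finset (Fin m)) :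
    ((Finset.univ : Finset (Fin m → ZMod 2)).filter
      (fun α => (∀ i ∈ N, α i = 0) ∧ ∃ i ∈ M, α i ≠ 0)).card
      = 2 ^ (m - N.card) - 2 ^ (m - (M ∪ N).card) := by
  classical
  have hset : ((Finset.univ : Finset (Fin m → ZMod 2)).filter
      (fun α => (∀ i ∈ N, α i = 0) ∧ ∃ i ∈ M, α i ≠ 0))
      = deltaC Nᶜ \ deltaC (M ∪ N)ᶜ := by
    ext α
    simp only [Finset.mem_filter, Finset.mem_univ, true_and, Finset.mem_sdiff,
      mem_deltaC', Finset.mem_compl, Finset.mem_union]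
    constructor
    · rintro ⟨hN, i, hiM, hi⟩
      refine ⟨fun j hj hjN => hj (hN j hjN), fun h => ?_⟩
      exact h i hi (Or.inl hiM)
    · rintro ⟨hN, h⟩
      push_neg at h
      obtain ⟨i, hi, hMN⟩ := h
      have hiN : i ∉ N := fun hc => hi (by
        by_contra hne
        exact (hN i hne) hc)
      rcases hMN with hM | hN'
      · exact ⟨fun j hj => by
          by_contra hc
          exact hN j hc hj, i, hM, hi⟩
      · exact absurd hN' hiN
  rw [hset, Finset.card_sdiff_of_subset (deltaC_mono' (by
    intro i hi
    simp only [Finset.mem_compl, Finset.mem_union] at hi ⊢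
    exact fun h => hi (Or.inr h)))]
  rw [card_deltaC', card_deltaC']
  congr 2 <;> rw [Finset.card_compl] <;> simp

private lemma class0_card' :
    ((Finset.univ : Finset (Fin m → ZMod 2)).filter
      (fun α : Fin m → ZMod 2 => α = 0)).card = 1 := by
  rw [Finset.filter_eq']
  simp

private lemma card_filter_fst' (p : (Fin m → ZMod 2) → Prop) [DecidablePred p] :
    ((Finset.univ : Finset ((Fin m → ZMod 2) × (Fin m → ZMod 2))).filter
      (fun v => p v.1)).card
      = ((Finset.univ : Finset (Fin m → ZMod 2)).filter p).card * 2 ^ m := by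
  have hset : (Finset.univ : Finset ((Fin m → ZMod 2) × (Fin m → ZMod 2))).filter
      (fun v => p v.1)
      = ((Finset.univ : Finset (Fin m → ZMod 2)).filter p) ×ˢ Finset.univ := by
    ext v
    simp [Finset.mem_product]
  rw [hset, Finset.card_product, card_univ_fun']

end stmt11aux

theorem stmt_11 {m : ℕ} (hm : 1 ≤ m) (M N : Finset (Fin m))
    (hMu : M ≠ Finset.univ) (hN : N ≠ ∅)
    (Ds : Finset ((Fin m → ZMod 2) × (Fin m → ZMod 2)))
    (hDs : Ds = (deltaC M)ᶜ ×ˢ deltaC N) :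
    Ds.card = (2 ^ m - 2 ^ M.card) * 2 ^ N.card ∧
    ((Finset.univ : Finset ((Fin m → ZMod 2) × (Fin m → ZMod 2))).image (cwR Ds)).card = 2 ^ m ∧
    (Finset.univ : Finset ((Fin m → ZMod 2) × (Fin m → ZMod 2))).val.map (fun v => hammingNorm (gcwR Ds v)) =
      Multiset.replicate (2 ^ m * (2 ^ m - 2 ^ (m - N.card)))
          ((2 ^ m - 2 ^ M.card) * 2 ^ N.card) +
      Multiset.replicate (2 ^ m * (2 ^ (m - (M ∪ N).card) - 1))
          (2 ^ (m + N.card - 1)) +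
      Multiset.replicate (2 ^ m * (2 ^ (m - N.card) - 2 ^ (m - (M ∪ N).card)))
          ((2 ^ m - 2 ^ M.card) * 2 ^ (N.card - 1)) +
      Multiset.replicate (2 ^ m)
          (0) := by
  classical
  refine ⟨?_, ?_, ?_⟩
  · -- part 1 : length
    rw [hDs, Finset.card_product, Finset.card_compl, card_deltaC', card_deltaC']
    congr 2
    rw [← card_univ_fun' (m := m)]
    rfl
  · -- part 2 : size of the code
    obtain ⟨j, hj⟩ : ∃ j, j ∉ M := by
      by_contra h
      push_neg at h
      exact hMu (Finset.eq_univ_iff_forall.2 h)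
    set h : (Fin m → ZMod 2) → ({d // d ∈ Ds} → ZMod 2 × ZMod 2) :=
      fun α => fun d => (dotp d.1.1 α, dotp d.1.2 α) with hh
    have himg : (Finset.univ : Finset ((Fin m → ZMod 2) × (Fin m → ZMod 2))).image (cwR Ds)
        = (Finset.univ : Finset (Fin m → ZMod 2)).image h := by
      ext g
      simp only [Finset.mem_image, Finset.mem_univ, true_and]
      constructor
      · rintro ⟨v, rfl⟩; exact ⟨v.1, rfl⟩
      · rintro ⟨α, rfl⟩; exact ⟨(α, 0), rfl⟩
    have hinj : Function.Injective h := by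
      intro α α' heq
      by_contra hne
      obtain ⟨i, hi⟩ := Function.ne_iff.1 hne
      set δ : Fin m → ZMod 2 := α + α' with hδ
      have hδi : δ i ≠ 0 :=
        (by decide : ∀ a b : ZMod 2, a ≠ b → a + b ≠ 0) (α i) (α' i) hi
      obtain ⟨t, htM, htδ⟩ : ∃ t : Fin m → ZMod 2, t ∉ deltaC M ∧ dotp t δ = 1 := by
        by_cases hδj : δ j = 0
        · have hij : i ≠ j := fun hc => hδi (hc ▸ hδj)
          refine ⟨Pi.single i 1 + Pi.single j 1, ?_, ?_⟩
          · intro hc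
            have := mem_deltaC'.1 hc j (by simp [Pi.single_apply, hij])
            exact hj this
          · rw [dotp_add_left', dotp_single', dotp_single', hδj, add_zero]
            exact (by decide : ∀ a : ZMod 2, a ≠ 0 → a = 1) _ hδi
        · refine ⟨Pi.single j 1, ?_, ?_⟩
          · intro hc
            have := mem_deltaC'.1 hc j (by simp [Pi.single_apply])
            exact hj this
          · rw [dotp_single']
            exact (by decide : ∀ a : ZMod 2, a ≠ 0 → a = 1) _ hδj
      have htDs : (t, (0 : Fin m → ZMod 2)) ∈ Ds := by
        rw [hDs, Finset.mem_product]
        exact ⟨Finset.mem_compl.2 htM, zero_mem_deltaC' N⟩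
      have hfun := congrFun heq ⟨(t, 0), htDs⟩
      have h1 : dotp t α = dotp t α' := (Prod.mk.injEq _ _ _ _ ▸ hfun).1
      have hz : dotp t δ = 0 := by
        rw [hδ, dotp_add_right', h1]
        exact (by decide : ∀ a : ZMod 2, a + a = 0) _
      rw [htδ] at hz
      exact (by decide : (1 : ZMod 2) ≠ 0) hz
    rw [himg, Finset.card_image_of_injective _ hinj, card_univ_fun']
  · -- part 3 : weight distribution
    have hNne : N.Nonempty := Finset.nonempty_iff_ne_empty.2 hN
    set f : ((Fin m → ZMod 2) × (Fin m → ZMod 2)) → ℕ := fun v => hammingNorm (gcwR Ds v) with hf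
    -- class weight values
    have w1 : ∀ v : ((Fin m → ZMod 2) × (Fin m → ZMod 2)), (∃ i ∈ N, v.1 i ≠ 0) →
        f v = (2 ^ m - 2 ^ M.card) * 2 ^ N.card := by
      intro v hv
      show hammingNorm (gcwR Ds v) = _
      rw [weight_formula' M N Ds hDs v, wsum_class1' hv]
    have w2 : ∀ v : ((Fin m → ZMod 2) × (Fin m → ZMod 2)), v.1 ≠ 0 → (∀ i ∈ N, v.1 i = 0) → (∀ i ∈ M, v.1 i = 0) →
        f v = 2 ^ (m + N.card - 1) := by
      intro v hv0 hvN hvM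
      show hammingNorm (gcwR Ds v) = _
      rw [weight_formula' M N Ds hDs v, wsum_classN0' hvN, w2val' hm v.1 hv0 hvM]
    have w3 : ∀ v : ((Fin m → ZMod 2) × (Fin m → ZMod 2)), (∀ i ∈ N, v.1 i = 0) → (∃ i ∈ M, v.1 i ≠ 0) →
        f v = (2 ^ m - 2 ^ M.card) * 2 ^ (N.card - 1) := by
      intro v hvN hvM
      obtain ⟨i, hiM, hi⟩ := hvM
      show hammingNorm (gcwR Ds v) = _
      rw [weight_formula' M N Ds hDs v, wsum_classN0' hvN, w3val' hNne v.1 hiM hi]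
    have w0 : ∀ v : ((Fin m → ZMod 2) × (Fin m → ZMod 2)), v.1 = 0 → f v = 0 := by
      intro v hv0
      have hvN : ∀ i ∈ N, v.1 i = 0 := fun i _ => by rw [hv0]; rfl
      have := wsum_classN0' (M := M) hvN
      show hammingNorm (gcwR Ds v) = _
      rw [weight_formula' M N Ds hDs v, this, hv0, Acard_zero' M, mul_zero]
    set U := (Finset.univ : Finset ((Fin m → ZMod 2) × (Fin m → ZMod 2))).val with hU
    have hdecomp : U = U.filter (fun v => ∃ i ∈ N, v.1 i ≠ 0)
        + U.filter (fun v => v.1 ≠ 0 ∧ (∀ i ∈ N, v.1 i = 0) ∧ (∀ i ∈ M, v.1 i = 0))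
        + U.filter (fun v => (∀ i ∈ N, v.1 i = 0) ∧ ∃ i ∈ M, v.1 i ≠ 0)
        + U.filter (fun v => v.1 = 0) := by
      refine Multiset.ext.2 fun a => ?_
      simp only [Multiset.count_add, Multiset.count_filter]
      by_cases h1 : ∃ i ∈ N, a.1 i ≠ 0
      · have h2 : ¬ (a.1 ≠ 0 ∧ (∀ i ∈ N, a.1 i = 0) ∧ (∀ i ∈ M, a.1 i = 0)) := by
          rintro ⟨_, hN2, _⟩
          obtain ⟨i, hiN, hi⟩ := h1
          exact hi (hN2 i hiN)
        have h3 : ¬ ((∀ i ∈ N, a.1 i = 0) ∧ ∃ i ∈ M, a.1 i ≠ 0) := by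
          rintro ⟨hN2, _⟩
          obtain ⟨i, hiN, hi⟩ := h1
          exact hi (hN2 i hiN)
        have h0 : ¬ (a.1 = 0) := by
          intro hz
          obtain ⟨i, _, hi⟩ := h1
          rw [hz] at hi
          exact hi rfl
        rw [if_pos h1, if_neg h2, if_neg h3, if_neg h0]
        omega
      · have hNz : ∀ i ∈ N, a.1 i = 0 := by
          intro i hi
          by_contra hc
          exact h1 ⟨i, hi, hc⟩
        by_cases h0 : a.1 = 0
        · have h2 : ¬ (a.1 ≠ 0 ∧ (∀ i ∈ N, a.1 i = 0) ∧ (∀ i ∈ M, a.1 i = 0)) :=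
            fun h => h.1 h0
          have h3 : ¬ ((∀ i ∈ N, a.1 i = 0) ∧ ∃ i ∈ M, a.1 i ≠ 0) := by
            rintro ⟨_, i, _, hi⟩
            rw [h0] at hi
            exact hi rfl
          rw [if_neg h1, if_neg h2, if_neg h3, if_pos h0]
          omega
        · by_cases h3 : ∃ i ∈ M, a.1 i ≠ 0
          · have h2 : ¬ (a.1 ≠ 0 ∧ (∀ i ∈ N, a.1 i = 0) ∧ (∀ i ∈ M, a.1 i = 0)) := by
              rintro ⟨_, _, hM2⟩
              obtain ⟨i, hiM, hi⟩ := h3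
              exact hi (hM2 i hiM)
            rw [if_neg h1, if_neg h2, if_pos ⟨hNz, h3⟩, if_neg h0]
            omega
          · have hMz : ∀ i ∈ M, a.1 i = 0 := by
              intro i hi
              by_contra hc
              exact h3 ⟨i, hi, hc⟩
            rw [if_neg h1, if_pos ⟨h0, hNz, hMz⟩,
              if_neg (fun h : (∀ i ∈ N, a.1 i = 0) ∧ ∃ i ∈ M, a.1 i ≠ 0 => h3 h.2),
              if_neg h0]
            omega
    have hmap : ∀ (P : ((Fin m → ZMod 2) × (Fin m → ZMod 2)) → Prop) [DecidablePred P] (p : (Fin m → ZMod 2) → Prop)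
        [DecidablePred p] (w n : ℕ),
        (∀ v : ((Fin m → ZMod 2) × (Fin m → ZMod 2)), P v ↔ p v.1) →
        (∀ v : ((Fin m → ZMod 2) × (Fin m → ZMod 2)), P v → f v = w) →
        ((Finset.univ : Finset (Fin m → ZMod 2)).filter p).card = n →
        (U.filter P).map f = Multiset.replicate (2 ^ m * n) w := by
      intro P _ p _ w n hPp hw hn
      rw [Multiset.eq_replicate]
      constructor
      · rw [Multiset.card_map, hU, ← Finset.filter_val, ← Finset.card_def]
        rw [show (Finset.univ : Finset ((Fin m → ZMod 2) × (Fin m → ZMod 2))).filter P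
            = (Finset.univ : Finset ((Fin m → ZMod 2) × (Fin m → ZMod 2))).filter (fun v => p v.1) from
          Finset.filter_congr (fun v _ => by rw [hPp v])]
        rw [card_filter_fst', hn, mul_comm]
      · intro b hb
        obtain ⟨v, hv, rfl⟩ := Multiset.mem_map.1 hb
        exact hw v (Multiset.mem_filter.1 hv).2
    calc U.map f
        = (U.filter (fun v => ∃ i ∈ N, v.1 i ≠ 0)
        + U.filter (fun v => v.1 ≠ 0 ∧ (∀ i ∈ N, v.1 i = 0) ∧ (∀ i ∈ M, v.1 i = 0))
        + U.filter (fun v => (∀ i ∈ N, v.1 i = 0) ∧ ∃ i ∈ M, v.1 i ≠ 0)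
        + U.filter (fun v => v.1 = 0)).map f := by rw [← hdecomp]
      _ = _ := by
          rw [Multiset.map_add, Multiset.map_add, Multiset.map_add]
          rw [hmap _ (fun α => ∃ i ∈ N, α i ≠ 0) _ _ (fun v => Iff.rfl)
              (fun v hv => w1 v hv) (class1_card' N),
            hmap _ (fun α => α ≠ 0 ∧ (∀ i ∈ N, α i = 0) ∧ (∀ i ∈ M, α i = 0)) _ _
              (fun v => Iff.rfl) (fun v hv => w2 v hv.1 hv.2.1 hv.2.2) (class2_card' M N),
            hmap _ (fun α => (∀ i ∈ N, α i = 0) ∧ ∃ i ∈ M, α i ≠ 0) _ _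
              (fun v => Iff.rfl) (fun v hv => w3 v hv.1 hv.2) (class3_card' M N),
            hmap _ (fun α : Fin m → ZMod 2 => α = 0) _ _ (fun v => Iff.rfl)
              (fun v hv => w0 v hv) class0_card']
          rw [mul_one]
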